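/- Let (I,μ) be an ideal of maximal order in characteristic zero (meaning D^μ(I) is the unit ideal), and set T(I) := D^{μ−1}(I) and H(I) := Σ_{i=0}^{μ−1} D^i(I)·T(I)^i. Then H(I) is stable under further homogenization-related operations: (a) H(I) = Σ_{i≥0} D^i(I)·T(I)^i (the terms for i ≥ μ are redundant), and (b) T(H(I)) := D^{μ−1}(H(I)) equals T(I). -/

import Mathlib

open MvPolynomial

/-- The first derivative ideal: generated by `I` and all first partial derivatives of
elements of `I`. -/
noncomputable def derivIdeal {K : Type*} [CommRing K] {n : ℕ}
    (I : Ideal (MvPolynomial (Fin n) K)) : Ideal (MvPolynomial (Fin n) K) :=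
  I ⊔ Ideal.span {g | ∃ f ∈ I, ∃ i : Fin n, g = pderiv i f}

/-- The `k`-th iterated derivative ideal. -/
noncomputable def derivIdealIter {K : Type*} [CommRing K] {n : ℕ} (k : ℕ)
    (I : Ideal (MvPolynomial (Fin n) K)) : Ideal (MvPolynomial (Fin n) K) :=
  derivIdeal^[k] I

section Aux

variable {K : Type*} [CommRing K] {n : ℕ}

lemma le_derivIdeal (I : Ideal (MvPolynomial (Fin n) K)) : I ≤ derivIdeal I :=
  le_sup_left

lemma pderiv_mem_derivIdeal {I : Ideal (MvPolynomial (Fin n) K)} {f : MvPolynomial (Fin n) K}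
    (hf : f ∈ I) (i : Fin n) : pderiv i f ∈ derivIdeal I :=
  Submodule.mem_sup_right (Ideal.subset_span ⟨f, hf, i, rfl⟩)

lemma derivIdeal_mono : Monotone (derivIdeal (K := K) (n := n)) := by
  intro I J h
  refine sup_le (h.trans le_sup_left) (le_trans (Ideal.span_mono ?_) le_sup_right)
  rintro g ⟨f, hf, i, rfl⟩
  exact ⟨f, h hf, i, rfl⟩

lemma derivIdeal_top : derivIdeal (⊤ : Ideal (MvPolynomial (Fin n) K)) = ⊤ :=
  eq_top_iff.mpr le_sup_left

lemma derivIdealIter_top (k : ℕ) : derivIdealIter k (⊤ : Ideal (MvPolynomial (Fin n) K)) = ⊤ :=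
  Function.iterate_fixed derivIdeal_top k

lemma derivIdealIter_mono (k : ℕ) : Monotone (derivIdealIter (K := K) (n := n) k) :=
  derivIdeal_mono.iterate k

lemma le_derivIdealIter (k : ℕ) (I : Ideal (MvPolynomial (Fin n) K)) :
    I ≤ derivIdealIter k I := by
  induction k with
  | zero => exact le_rfl
  | succ k ih =>
    calc I ≤ derivIdealIter k I := ih
    _ ≤ derivIdeal (derivIdealIter k I) := le_derivIdeal _
    _ = derivIdealIter (k + 1) I := (Function.iterate_succ_apply' _ _ _).symm

lemma derivIdealIter_succ' (k : ℕ) (I : Ideal (MvPolynomial (Fin n) K)) :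
    derivIdealIter (k + 1) I = derivIdeal (derivIdealIter k I) :=
  Function.iterate_succ_apply' _ _ _

lemma derivIdealIter_le_derivIdealIter {k l : ℕ} (h : k ≤ l) (I : Ideal (MvPolynomial (Fin n) K)) :
    derivIdealIter k I ≤ derivIdealIter l I := by
  obtain ⟨a, rfl⟩ := Nat.exists_eq_add_of_le h
  show derivIdealIter k I ≤ derivIdeal^[k + a] I
  rw [add_comm, Function.iterate_add_apply]
  exact le_derivIdealIter a _

lemma derivIdealIter_eq_top {I : Ideal (MvPolynomial (Fin n) K)} {μ k : ℕ}
    (hmax : derivIdealIter μ I = ⊤) (h : μ ≤ k) : derivIdealIter k I = ⊤ :=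
  eq_top_iff.mpr (hmax ▸ derivIdealIter_le_derivIdealIter h I)

/-- Leibniz rule for the derivative ideal. -/
lemma derivIdeal_mul_le (J L : Ideal (MvPolynomial (Fin n) K)) :
    derivIdeal (J * L) ≤ derivIdeal J * L + J * derivIdeal L := by
  refine sup_le ?_ ?_
  · exact le_trans (Ideal.mul_mono_left (le_derivIdeal J)) (le_trans le_sup_left
      (le_of_eq (Ideal.add_eq_sup).symm))
  · rw [Ideal.span_le]
    rintro g ⟨f, hf, i, rfl⟩
    refine Submodule.mul_induction_on hf (fun a ha b hb => ?_) (fun x y hx hy => ?_)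
    · rw [pderiv_mul]
      refine add_mem (Submodule.mem_sup_left ?_) (Submodule.mem_sup_right ?_)
      · exact Ideal.mul_mem_mul (pderiv_mem_derivIdeal ha i) hb
      · exact Ideal.mul_mem_mul ha (pderiv_mem_derivIdeal hb i)
    · rw [map_add]
      exact add_mem hx hy

lemma derivIdeal_pow_le (T : Ideal (MvPolynomial (Fin n) K)) (i : ℕ) :
    derivIdeal (T ^ (i + 1)) ≤ T ^ i := by
  induction i with
  | zero => simp
  | succ i ih =>
    have h1 : derivIdeal (T ^ (i + 2)) ≤ derivIdeal (T ^ (i + 1)) * T + T ^ (i + 1) * derivIdeal T := by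
      rw [show T ^ (i + 2) = T ^ (i + 1) * T from pow_succ T (i + 1)]
      exact derivIdeal_mul_le _ _
    refine h1.trans ?_
    rw [Ideal.add_eq_sup]
    refine sup_le ?_ Ideal.mul_le_left
    calc derivIdeal (T ^ (i + 1)) * T ≤ T ^ i * T := Ideal.mul_mono_left ih
    _ = T ^ (i + 1) := (pow_succ T i).symm

lemma derivIdeal_iSup_le (F : ℕ → Ideal (MvPolynomial (Fin n) K)) :
    derivIdeal (⨆ i, F i) ≤ ⨆ i, derivIdeal (F i) := by
  refine sup_le (iSup_mono fun i => le_derivIdeal _) ?_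
  rw [Ideal.span_le]
  rintro g ⟨f, hf, j, rfl⟩
  refine Submodule.iSup_induction (motive := fun x => pderiv j x ∈ ⨆ i, derivIdeal (F i)) F hf
    (fun i x hx => ?_) (by simp) (fun x y hx hy => by simp only [map_add]; exact add_mem hx hy)
  exact Submodule.mem_iSup_of_mem i (pderiv_mem_derivIdeal hx j)

/-- The key step: applying `D` to `⨆ i, D^{i+j}(I)·T^i` lands in `⨆ i, D^{i+j+1}(I)·T^i`,
where `T = D^m(I)`. -/
lemma derivIdeal_S_le (I : Ideal (MvPolynomial (Fin n) K)) (m j : ℕ) :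
    derivIdeal (⨆ i : ℕ, derivIdealIter (i + j) I * derivIdealIter m I ^ i)
      ≤ ⨆ i : ℕ, derivIdealIter (i + (j + 1)) I * derivIdealIter m I ^ i := by
  set T := derivIdealIter m I with hT
  refine (derivIdeal_iSup_le _).trans (iSup_le fun i => ?_)
  refine (derivIdeal_mul_le _ _).trans ?_
  rw [Ideal.add_eq_sup]
  refine sup_le ?_ ?_
  · -- D^{i+j+1}(I) · T^i
    refine le_trans (le_of_eq ?_) (le_iSup _ i)
    rw [← derivIdealIter_succ', Nat.add_assoc]
  · match i with
    | 0 =>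
      refine le_trans ?_ (le_iSup _ 0)
      simp only [pow_zero, Ideal.one_eq_top, derivIdeal_top, Ideal.mul_top, zero_add]
      exact derivIdealIter_le_derivIdealIter (Nat.le_succ j) I
    | (i + 1) =>
      refine le_trans ?_ (le_iSup _ i)
      exact Ideal.mul_mono (le_of_eq (by congr 1; omega)) (derivIdeal_pow_le T i)

lemma derivIdealIter_S_le (I : Ideal (MvPolynomial (Fin n) K)) (m k : ℕ) :
    derivIdealIter k (⨆ i : ℕ, derivIdealIter i I * derivIdealIter m I ^ i)
      ≤ ⨆ i : ℕ, derivIdealIter (i + k) I * derivIdealIter m I ^ i := by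
  induction k with
  | zero =>
    refine le_of_eq ?_
    simp [derivIdealIter]
  | succ k ih =>
    rw [derivIdealIter_succ']
    exact le_trans (derivIdeal_mono ih) (derivIdeal_S_le I m k)

end Aux

/-- For `(I,μ)` of maximal order (`D^μ(I) = (1)`), with `T(I) = D^{μ−1}(I)` and
`H(I) = Σ_{i=0}^{μ−1} D^i(I)·T(I)^i`:
(a) `H(I) = Σ_{i≥0} D^i(I)·T(I)^i` (the terms for `i ≥ μ` are redundant), and
(b) `T(H(I)) = D^{μ−1}(H(I)) = T(I)`. -/
theorem stmt_8 {K : Type*} [Field K] [CharZero K] {n : ℕ}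
    (I : Ideal (MvPolynomial (Fin n) K)) (μ : ℕ) (hμ : 1 ≤ μ)
    (hmax : derivIdealIter μ I = ⊤) :
    ((∑ i ∈ Finset.range μ, derivIdealIter i I * derivIdealIter (μ - 1) I ^ i)
        = ⨆ i : ℕ, derivIdealIter i I * derivIdealIter (μ - 1) I ^ i)
    ∧ derivIdealIter (μ - 1)
          (∑ i ∈ Finset.range μ, derivIdealIter i I * derivIdealIter (μ - 1) I ^ i)
        = derivIdealIter (μ - 1) I := by
  set m := μ - 1 with hm
  have hμm : μ = m + 1 := by omega
  set T := derivIdealIter m I with hT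
  set F : ℕ → Ideal (MvPolynomial (Fin n) K) := fun i => derivIdealIter i I * T ^ i with hF
  have hFtop : ∀ i, μ ≤ i → F i = T ^ i := by
    intro i hi
    simp [hF, derivIdealIter_eq_top hmax hi, Ideal.top_mul]
  -- part (a)
  have ha : (∑ i ∈ Finset.range μ, F i) = ⨆ i : ℕ, F i := by
    rw [Ideal.sum_eq_sup]
    refine le_antisymm (Finset.sup_le fun i _ => le_iSup F i) (iSup_le fun i => ?_)
    rcases lt_or_ge i μ with hi | hi
    · exact Finset.le_sup (Finset.mem_range.mpr hi)
    · refine le_trans ?_ (Finset.le_sup (f := F) (Finset.mem_range.mpr (by omega : m < μ)))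
      rw [hFtop i hi]
      have : F m = T ^ μ := by
        show T * T ^ m = T ^ μ
        rw [hμm, pow_succ, mul_comm]
      rw [this]
      exact Ideal.pow_le_pow_right hi
  refine ⟨ha, le_antisymm ?_ ?_⟩
  · -- D^m(H) ≤ T
    rw [ha]
    refine le_trans (derivIdealIter_S_le I m m) (iSup_le fun i => ?_)
    match i with
    | 0 => simp [← hT]
    | (i + 1) =>
      have htop : derivIdealIter (i + 1 + m) I = ⊤ :=
        derivIdealIter_eq_top hmax (by omega)
      rw [htop, Ideal.top_mul]
      exact Ideal.pow_le_self (Nat.succ_ne_zero i)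
  · -- T ≤ D^m(H)
    refine derivIdealIter_mono m ?_
    refine le_trans ?_ (Finset.single_le_sum (f := F) (fun i _ => bot_le)
      (Finset.mem_range.mpr (by omega : 0 < μ)))
    simp [hF, derivIdealIter]
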